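/- Let G be a topological group (not necessarily abelian) and H a closed normal subgroup such that both H and G/H are P-groups. Then G is a P-group. -/

import Mathlib

open Pointwise Function

noncomputable section

/-- The canonical evaluation homomorphism of a topological abelian group into its
Pontryagin bidual, `x ↦ (χ ↦ χ x)`. -/
noncomputable def pontryaginEval (G : Type*) [CommGroup G] [TopologicalSpace G]
    [IsTopologicalGroup G] : G →* PontryaginDual (PontryaginDual G) where
  toFun x :=
    { toFun := fun χ => χ x
      map_one' := rfl
      map_mul' := fun _ _ => rfl
      continuous_toFun :=
        (continuous_eval_const (F := ContinuousMonoidHom G Circle) x :) }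
  map_one' := ContinuousMonoidHom.ext fun χ => map_one χ
  map_mul' x y := ContinuousMonoidHom.ext fun χ => map_mul χ x y

/-- A topological group is protodiscrete (linear) if open subgroups form a
neighborhood base at the identity. -/
def Protodiscrete (G : Type*) [Group G] [TopologicalSpace G] : Prop :=
  ∀ U ∈ nhds (1 : G), ∃ V : Subgroup G, IsOpen (V : Set G) ∧ (V : Set G) ⊆ U

/-- A topological group is precompact (totally bounded) if every neighborhood of the
identity has finitely many translates covering the group. -/
def Precompact (G : Type*) [Group G] [TopologicalSpace G] : Prop :=
  ∀ U ∈ nhds (1 : G), ∃ F : Finset G, ∀ x : G, ∃ f ∈ F, x ∈ f • U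

/-- A topological abelian group is (Pontryagin) reflexive if the canonical evaluation
map into its bidual is a topological isomorphism. -/
def PontryaginReflexive (G : Type*) [CommGroup G] [TopologicalSpace G]
    [IsTopologicalGroup G] : Prop :=
  IsHomeomorph (pontryaginEval G)

/-- A subgroup is dually embedded if every continuous character of it extends to a
continuous character of the ambient group. -/
def DuallyEmbedded {G : Type*} [CommGroup G] [TopologicalSpace G] [IsTopologicalGroup G]
    (L : Subgroup G) : Prop :=
  ∀ χ : PontryaginDual L, ∃ ψ : PontryaginDual G, ∀ x : L, ψ (x : G) = χ x

/-- The annihilator of a subset `K` of `G` in the dual group. -/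
def annihilator {G : Type*} [CommGroup G] [TopologicalSpace G] [IsTopologicalGroup G]
    (K : Set G) : Subgroup (PontryaginDual G) where
  carrier := {χ | ∀ x ∈ K, χ x = 1}
  one_mem' := fun x _ => rfl
  mul_mem' := by
    intro a b ha hb x hx
    show a x * b x = 1
    rw [ha x hx, hb x hx, one_mul]
  inv_mem' := by
    intro a ha x hx
    show (a x)⁻¹ = 1
    rw [ha x hx, inv_one]

/-- A `P`-space: every countable intersection of open sets is open. -/
def IsPSpace (X : Type*) [TopologicalSpace X] : Prop :=
  ∀ s : ℕ → Set X, (∀ n, IsOpen (s n)) → IsOpen (⋂ n, s n)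

/-- A set is `Gδ`-dense if it meets every nonempty `Gδ`-set. -/
def GdeltaDense {X : Type*} [TopologicalSpace X] (s : Set X) : Prop :=
  ∀ t : ℕ → Set X, (∀ n, IsOpen (t n)) → (⋂ n, t n).Nonempty → (s ∩ ⋂ n, t n).Nonempty

/-- The graph of a homomorphism, as a subgroup of the product. -/
def graphSubgroup {H₁ H₂ : Type*} [CommGroup H₁] [CommGroup H₂] (φ : H₁ →* H₂) :
    Subgroup (H₁ × H₂) where
  carrier := {p | p.2 = φ p.1}
  one_mem' := (map_one φ).symm
  mul_mem' := by
    rintro ⟨a, b⟩ ⟨c, d⟩ hb hd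
    simp only [Set.mem_setOf_eq] at *
    simp [hb, hd]
  inv_mem' := by
    rintro ⟨a, b⟩ h
    simp only [Set.mem_setOf_eq] at *
    simp [h]

/-- The Σ-product of `D` copies of the circle group inside `𝕋^D`. -/
def sigmaProd (D : Type*) : Subgroup (D → Circle) where
  carrier := {x | {d | x d ≠ 1}.Countable}
  one_mem' := by simp
  mul_mem' := by
    intro a b ha hb
    refine Set.Countable.mono ?_ (ha.union hb)
    intro d hd
    simp only [Set.mem_union, Set.mem_setOf_eq]
    by_contra h
    push_neg at h
    exact hd (by show a d * b d = 1; rw [h.1, h.2, one_mul])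
  inv_mem' := by
    intro a ha
    refine Set.Countable.mono ?_ ha
    intro d hd
    simp only [Set.mem_setOf_eq] at *
    simpa [inv_eq_one] using hd

/-- The group of continuous `Circle`-valued functions on `Y`, as a subgroup of the
product `Y → Circle`; the subspace topology is the topology of pointwise convergence. -/
def Cp (Y : Type*) [TopologicalSpace Y] : Subgroup (Y → Circle) where
  carrier := {f | Continuous f}
  one_mem' := continuous_const
  mul_mem' := fun hf hg => hf.mul hg
  inv_mem' := fun hf => hf.inv

/-- The one-point Lindelöfication of a discrete set `D`: the point `none` has the
co-countable sets as neighborhoods, all other points are isolated. -/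
def Lind (D : Type*) := Option D

instance (D : Type*) : TopologicalSpace (Lind D) where
  IsOpen U := (none : Option D) ∈ U → {d : D | (some d : Option D) ∉ U}.Countable
  isOpen_univ := by
    intro _
    exact Set.countable_empty.mono (fun d hd =>
      (hd : (some d : Option D) ∉ (Set.univ : Set (Lind D))) trivial)
  isOpen_inter := by
    intro U V hU hV h
    refine Set.Countable.mono ?_ ((hU h.1).union (hV h.2))
    intro d hd
    simp only [Set.mem_union, Set.mem_setOf_eq] at *
    by_contra hc
    push_neg at hc
    exact hd ⟨hc.1, hc.2⟩
  isOpen_sUnion := by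
    intro S hS h
    obtain ⟨U, hUS, hU⟩ := h
    refine Set.Countable.mono ?_ (hS U hUS hU)
    intro d hd
    simp only [Set.mem_setOf_eq] at *
    exact fun hdU => hd ⟨U, hUS, hdU⟩

end

section AuxP

variable {G : Type*} [Group G] [TopologicalSpace G] [IsTopologicalGroup G]

lemma aux_sym_nhds {U : Set G} (hU : U ∈ nhds 1) :
    ∃ W : Set G, IsOpen W ∧ (1 : G) ∈ W ∧ W⁻¹ = W ∧ W * W ⊆ U := by
  obtain ⟨V, hVo, hV1, hVU⟩ := exists_open_nhds_one_mul_subset hU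
  refine ⟨V ∩ V⁻¹, hVo.inter hVo.inv, ⟨hV1, by simpa using hV1⟩, ?_, ?_⟩
  · rw [Set.inter_inv, inv_inv, Set.inter_comm]
  · exact (Set.mul_subset_mul Set.inter_subset_left Set.inter_subset_left).trans hVU

lemma aux_seq (U : ℕ → Set G) (hU : ∀ n, U n ∈ nhds 1) :
    ∃ W : ℕ → Set G, (∀ n, IsOpen (W n)) ∧ (∀ n, (1 : G) ∈ W n) ∧
      (∀ n, (W n)⁻¹ = W n) ∧ (∀ n, W n ⊆ U n) ∧ (∀ n, W (n + 1) * W (n + 1) ⊆ W n) := by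
  have h : ∀ V : Set G, ∃ W : Set G, V ∈ nhds 1 →
      IsOpen W ∧ (1 : G) ∈ W ∧ W⁻¹ = W ∧ W * W ⊆ V := by
    intro V
    by_cases hV : V ∈ nhds 1
    · obtain ⟨W, a1, a2, a3, a4⟩ := aux_sym_nhds hV
      exact ⟨W, fun _ => ⟨a1, a2, a3, a4⟩⟩
    · exact ⟨∅, fun hc => absurd hc hV⟩
  choose f hf using h
  set W : ℕ → Set G := fun n => Nat.rec (f (U 0)) (fun n Wn => f (Wn ∩ U (n + 1))) n with hWdef
  have main : ∀ n, IsOpen (W n) ∧ (1 : G) ∈ W n ∧ (W n)⁻¹ = W n ∧ W n ⊆ U n := by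
    intro n
    induction n with
    | zero =>
      obtain ⟨a1, a2, a3, a4⟩ := hf (U 0) (hU 0)
      exact ⟨a1, a2, a3, (Set.subset_mul_left _ a2).trans a4⟩
    | succ n ih =>
      have hmem : W n ∩ U (n + 1) ∈ nhds 1 :=
        Filter.inter_mem (ih.1.mem_nhds ih.2.1) (hU (n + 1))
      obtain ⟨a1, a2, a3, a4⟩ := hf (W n ∩ U (n + 1)) hmem
      exact ⟨a1, a2, a3, ((Set.subset_mul_left _ a2).trans a4).trans Set.inter_subset_right⟩
  refine ⟨W, fun n => (main n).1, fun n => (main n).2.1, fun n => (main n).2.2.1,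
    fun n => (main n).2.2.2, fun n => ?_⟩
  have hmem : W n ∩ U (n + 1) ∈ nhds 1 :=
    Filter.inter_mem ((main n).1.mem_nhds (main n).2.1) (hU (n + 1))
  exact ((hf (W n ∩ U (n + 1)) hmem).2.2.2).trans Set.inter_subset_left

lemma aux_antitone {W : ℕ → Set G} (h1 : ∀ n, (1 : G) ∈ W n)
    (hsq : ∀ n, W (n + 1) * W (n + 1) ⊆ W n) : ∀ m n, m ≤ n → W n ⊆ W m := by
  intro m n hmn
  induction hmn with
  | refl => exact subset_rfl
  | step h ih => exact ((Set.subset_mul_left _ (h1 _)).trans (hsq _)).trans ih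

lemma aux_key (H : Subgroup G) [H.Normal]
    (h1 : IsPSpace H) (h2 : IsPSpace (G ⧸ H)) (U : ℕ → Set G) (hU : ∀ n, U n ∈ nhds 1) :
    ∃ N : Set G, IsOpen N ∧ (1 : G) ∈ N ∧ N ⊆ ⋂ n, U n := by
  obtain ⟨W, hWo, hW1, hWs, hWU, hWsq⟩ := aux_seq U hU
  -- use the P-property of H
  have htop : IsOpen (⋂ n, ((↑) : H → G) ⁻¹' W n) :=
    h1 _ fun n => (hWo n).preimage continuous_subtype_val
  rw [isOpen_induced_iff] at htop
  obtain ⟨O, hOo, hOeq⟩ := htop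
  have hO1 : (1 : G) ∈ O := by
    have : (1 : H) ∈ ((↑) : H → G) ⁻¹' O := by
      rw [hOeq]; exact Set.mem_iInter.2 fun n => by simpa using hW1 n
    simpa using this
  have hOW : ∀ x : G, x ∈ H → x ∈ O → ∀ n, x ∈ W n := by
    intro x hxH hxO n
    have : (⟨x, hxH⟩ : H) ∈ ((↑) : H → G) ⁻¹' O := hxO
    rw [hOeq] at this
    exact Set.mem_iInter.1 this n
  -- second sequence
  obtain ⟨W', hW'o, hW'1, hW's, hW'U, hW'sq⟩ := aux_seq (fun n => O ∩ W n)
    (fun n => Filter.inter_mem (hOo.mem_nhds hO1) ((hWo n).mem_nhds (hW1 n)))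
  have hW'anti := aux_antitone hW'1 hW'sq
  -- use the P-property of G ⧸ H
  have hTop : IsOpen (⋂ n, (QuotientGroup.mk '' W' (n + 2) : Set (G ⧸ H))) :=
    h2 _ fun n => QuotientGroup.isOpenMap_coe _ (hW'o (n + 2))
  refine ⟨(QuotientGroup.mk ⁻¹' ⋂ n, (QuotientGroup.mk '' W' (n + 2) : Set (G ⧸ H))) ∩ W' 2,
    (hTop.preimage QuotientGroup.isOpenQuotientMap_mk.continuous).inter (hW'o 2),
    ⟨Set.mem_iInter.2 fun n => ⟨1, hW'1 _, rfl⟩, hW'1 2⟩, ?_⟩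
  rintro x ⟨hxT, hx2⟩
  refine Set.mem_iInter.2 fun n => ?_
  obtain ⟨w, hw, hwx⟩ := Set.mem_iInter.1 hxT n
  have hhH : w⁻¹ * x ∈ H := (QuotientGroup.eq).1 hwx
  have hhO : w⁻¹ * x ∈ O := by
    have hw2 : w⁻¹ ∈ W' 2 := by
      rw [← hW's 2]; exact Set.inv_mem_inv.2 (hW'anti 2 (n + 2) (by omega) hw)
    have : w⁻¹ * x ∈ W' 1 := hW'sq 1 (Set.mul_mem_mul hw2 hx2)
    exact (hW'U 1 this).1
  have hhW : w⁻¹ * x ∈ W (n + 1) := hOW _ hhH hhO (n + 1)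
  have hwW : w ∈ W (n + 1) := by
    have : w ∈ W (n + 2) := (hW'U (n + 2) (hW'anti (n + 2) (n + 2) le_rfl hw)).2
    exact aux_antitone hW1 hWsq (n + 1) (n + 2) (by omega) this
  have : w * (w⁻¹ * x) ∈ W n := hWsq n (Set.mul_mem_mul hwW hhW)
  simpa [mul_inv_cancel_left] using hWU n this

end AuxP

/-- if `H` is a closed normal subgroup of `G` and both `H` and `G/H` are
P-groups, then `G` is a P-group. -/
theorem statement9 (G : Type*) [Group G] [TopologicalSpace G] [IsTopologicalGroup G]
    (H : Subgroup G) [H.Normal] (hH : IsClosed (H : Set G))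
    (h1 : IsPSpace H) (h2 : IsPSpace (G ⧸ H)) :
    IsPSpace G := by
  intro s hs
  rw [isOpen_iff_forall_mem_open]
  intro x hx
  set U : ℕ → Set G := fun n => (fun y => x * y) ⁻¹' s n with hUdef
  have hU : ∀ n, U n ∈ nhds 1 := fun n =>
    ((hs n).preimage (continuous_mul_left x)).mem_nhds
      (by simpa using Set.mem_iInter.1 hx n)
  obtain ⟨N, hNo, hN1, hNsub⟩ := aux_key H h1 h2 U hU
  refine ⟨(fun y => x * y) '' N, ?_, (Homeomorph.mulLeft x).isOpenMap _ hNo, ⟨1, hN1, mul_one x⟩⟩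
  rintro y ⟨z, hz, rfl⟩
  exact Set.mem_iInter.2 fun n => Set.mem_iInter.1 (hNsub hz) n
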